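/- Let G and H be short dicotic games. If G + H = 0 (mod D⁻), then H = −G (mod D⁻). -/

import Mathlib

universe u

namespace SetTheory

/-- Pre-games, as in Mathlib (December 2024); removed from Mathlib since. -/
inductive PGame : Type (u + 1)
  | mk : ∀ α β : Type u, (α → PGame) → (β → PGame) → PGame

namespace PGame

def LeftMoves : PGame → Type u
  | mk l _ _ _ => l

def RightMoves : PGame → Type u
  | mk _ r _ _ => r

def moveLeft : ∀ g : PGame, LeftMoves g → PGame
  | mk _l _ L _ => L

def moveRight : ∀ g : PGame, RightMoves g → PGame
  | mk _ _r _ R => R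

inductive IsOption : PGame → PGame → Prop
  | moveLeft {x : PGame} (i : x.LeftMoves) : IsOption (x.moveLeft i) x
  | moveRight {x : PGame} (i : x.RightMoves) : IsOption (x.moveRight i) x

instance : Zero PGame :=
  ⟨⟨PEmpty, PEmpty, PEmpty.elim, PEmpty.elim⟩⟩

def star : PGame.{u} :=
  ⟨PUnit, PUnit, fun _ => 0, fun _ => 0⟩

def Identical : PGame.{u} → PGame.{u} → Prop
  | mk _ _ xL xR, mk _ _ yL yR =>
    Relator.BiTotal (fun i j ↦ Identical (xL i) (yL j)) ∧
      Relator.BiTotal (fun i j ↦ Identical (xR i) (yR j))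

def neg : PGame → PGame
  | ⟨l, r, L, R⟩ => ⟨r, l, fun i => neg (R i), fun i => neg (L i)⟩

instance : Neg PGame :=
  ⟨neg⟩

noncomputable instance : Add PGame.{u} :=
  ⟨fun x y => by
    induction x generalizing y with | mk xl xr _ _ IHxl IHxr => _
    induction y with | mk yl yr yL yR IHyl IHyr => _
    have y := mk yl yr yL yR
    refine ⟨xl ⊕ yl, xr ⊕ yr, Sum.rec ?_ ?_, Sum.rec ?_ ?_⟩
    · exact fun i => IHxl i y
    · exact IHyl
    · exact fun i => IHxr i y
    · exact IHyr⟩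

noncomputable def birthday : PGame.{u} → Ordinal.{u}
  | ⟨_, _, xL, xR⟩ =>
    max (Ordinal.lsub.{u, u} fun i => birthday (xL i)) (Ordinal.lsub.{u, u} fun i => birthday (xR i))

theorem birthday_moveLeft_lt {x : PGame} (i : x.LeftMoves) : (x.moveLeft i).birthday < x.birthday := by
  cases x; rw [birthday]; exact lt_max_of_lt_left (Ordinal.lt_lsub _ i)

theorem birthday_moveRight_lt {x : PGame} (i : x.RightMoves) : (x.moveRight i).birthday < x.birthday := by
  cases x; rw [birthday]; exact lt_max_of_lt_right (Ordinal.lt_lsub _ i)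

end PGame

end SetTheory

open SetTheory PGame

namespace MisereDicot

def Follower (G' G : PGame) : Prop := Relation.ReflTransGen PGame.IsOption G' G

def IsShort (G : PGame) : Prop :=
  ∀ G', Follower G' G → Finite G'.LeftMoves ∧ Finite G'.RightMoves

def Dicot (G : PGame) : Prop :=
  ∀ G', Follower G' G → (IsEmpty G'.LeftMoves ↔ IsEmpty G'.RightMoves)

mutual
def LeftWinsFirst (G : PGame) : Prop :=
  IsEmpty G.LeftMoves ∨ ∃ i, ¬ RightWinsFirst (G.moveLeft i)
termination_by G.birthday
decreasing_by exact PGame.birthday_moveLeft_lt i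

def RightWinsFirst (G : PGame) : Prop :=
  IsEmpty G.RightMoves ∨ ∃ j, ¬ LeftWinsFirst (G.moveRight j)
termination_by G.birthday
decreasing_by exact PGame.birthday_moveRight_lt j
end

inductive MOutcome : Type
  | L | N | P | R
deriving DecidableEq

instance : LE MOutcome := ⟨fun a b => a = b ∨ a = .R ∨ b = .L⟩

noncomputable def outcome (G : PGame) : MOutcome := by
  classical
  exact if LeftWinsFirst G then (if RightWinsFirst G then .N else .L)
        else (if RightWinsFirst G then .R else .P)

def Dge (G H : PGame) : Prop :=
  ∀ X : PGame, IsShort X → Dicot X → outcome (H + X) ≤ outcome (G + X)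

def Deq (G H : PGame) : Prop :=
  ∀ X : PGame, IsShort X → Dicot X → outcome (G + X) = outcome (H + X)

def Dgt (G H : PGame) : Prop := Dge G H ∧ ¬ Deq G H

def DInvertible (G : PGame) : Prop :=
  ∃ H : PGame, IsShort H ∧ Dicot H ∧ Deq (G + H) 0

/-- The left option `G^L_i` is reversible through its right option `(G^L_i)^R_j ≼ G`. -/
def LeftReversibleAt (G : PGame) (i : G.LeftMoves) (j : (G.moveLeft i).RightMoves) : Prop :=
  Dge G ((G.moveLeft i).moveRight j)

def RightReversibleAt (G : PGame) (j : G.RightMoves) (i : (G.moveRight j).LeftMoves) : Prop :=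
  Dge ((G.moveRight j).moveLeft i) G

/-- `G` has a dominated left option (removable by the Domination theorem). -/
def LeftDominated (G : PGame) : Prop :=
  ∃ i i' : G.LeftMoves, ¬ (G.moveLeft i).Identical (G.moveLeft i') ∧
    Dge (G.moveLeft i') (G.moveLeft i)

def RightDominated (G : PGame) : Prop :=
  ∃ j j' : G.RightMoves, ¬ (G.moveRight j).Identical (G.moveRight j') ∧
    Dge (G.moveRight j) (G.moveRight j')

/-- `G` has a non-atomic reversible left option (bypassable). -/
def LeftNonAtomicReversible (G : PGame) : Prop :=
  ∃ i j, LeftReversibleAt G i j ∧ Nonempty ((G.moveLeft i).moveRight j).LeftMoves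

def RightNonAtomicReversible (G : PGame) : Prop :=
  ∃ j i, RightReversibleAt G j i ∧ Nonempty ((G.moveRight j).moveLeft i).RightMoves

/-- `G` has an atomic-reversible left option to which the atomic-reversibility
replacement applies nontrivially (i.e. changing the set of options): either some
other left option is a winning first move for Left (so the option is removable),
or the option is not already `*`. -/
def LeftAtomicReducible (G : PGame) : Prop :=
  ∃ i j, LeftReversibleAt G i j ∧ IsEmpty ((G.moveLeft i).moveRight j).LeftMoves ∧
    ((∃ i', ¬ (G.moveLeft i').Identical (G.moveLeft i) ∧ ¬ RightWinsFirst (G.moveLeft i')) ∨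
      ¬ (G.moveLeft i).Identical star)

def RightAtomicReducible (G : PGame) : Prop :=
  ∃ j i, RightReversibleAt G j i ∧ IsEmpty ((G.moveRight j).moveLeft i).RightMoves ∧
    ((∃ j', ¬ (G.moveRight j').Identical (G.moveRight j) ∧ ¬ LeftWinsFirst (G.moveRight j')) ∨
      ¬ (G.moveRight j).Identical star)

/-- The Substitution theorem applies to `G`: `G = {A | C}` with `A` an
atomic-reversible left option and `C` an atomic-reversible right option. -/
def SubstitutionReducible (G : PGame) : Prop :=
  (∀ i i' : G.LeftMoves, (G.moveLeft i).Identical (G.moveLeft i')) ∧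
  (∀ j j' : G.RightMoves, (G.moveRight j).Identical (G.moveRight j')) ∧
  (∃ i j, LeftReversibleAt G i j ∧ IsEmpty ((G.moveLeft i).moveRight j).LeftMoves) ∧
  (∃ j i, RightReversibleAt G j i ∧ IsEmpty ((G.moveRight j).moveLeft i).RightMoves)

/-- `G` is in canonical form: no follower admits any of the misère-dicot
simplifications (domination, non-atomic reversibility, atomic reversibility,
substitution) producing an equivalent game with a different set of options. -/
def CanonicalForm (G : PGame) : Prop :=
  ∀ G', Follower G' G →
    ¬ (LeftDominated G' ∨ RightDominated G' ∨
       LeftNonAtomicReversible G' ∨ RightNonAtomicReversible G' ∨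
       LeftAtomicReducible G' ∨ RightAtomicReducible G' ∨
       SubstitutionReducible G')

/-- The game `*2 = {0, * | 0, *}`. -/
def star2 : PGame :=
  PGame.mk Bool Bool (fun b => cond b star 0) (fun b => cond b star 0)

open Classical in
/-- The adjoint `G°` of `G`. -/
noncomputable def adjoint : PGame → PGame
  | PGame.mk l r L R =>
    if IsEmpty l ∧ IsEmpty r then star
    else if IsEmpty l then PGame.mk r PUnit (fun j => adjoint (R j)) (fun _ => 0)
    else if IsEmpty r then PGame.mk PUnit l (fun _ => 0) (fun i => adjoint (L i))
    else PGame.mk r l (fun j => adjoint (R j)) (fun i => adjoint (L i))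

/-- A universe of short games: a class closed under taking options, disjunctive
sums and conjugates. -/
structure GameUniverse where
  mem : PGame → Prop
  short_mem : ∀ G, mem G → IsShort G
  isOption_mem : ∀ G G', mem G → PGame.IsOption G' G → mem G'
  add_mem : ∀ G H, mem G → mem H → mem (G + H)
  neg_mem : ∀ G, mem G → mem (-G)

/-- `G ≽ H` modulo the universe `U`. -/
def UGe (U : GameUniverse) (G H : PGame) : Prop :=
  ∀ X : PGame, U.mem X → outcome (H + X) ≤ outcome (G + X)

/-- `G = H` modulo the universe `U`. -/
def UEq (U : GameUniverse) (G H : PGame) : Prop :=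
  ∀ X : PGame, U.mem X → outcome (G + X) = outcome (H + X)

/-- `G ≻ H` modulo the universe `U`. -/
def UGt (U : GameUniverse) (G H : PGame) : Prop := UGe U G H ∧ ¬ UEq U G H

/-- `J` is invertible in the universe `U`. -/
def UInvertible (U : GameUniverse) (J : PGame) : Prop :=
  ∃ J' : PGame, U.mem J' ∧ UEq U (J + J') 0

end MisereDicot

namespace SetTheory

namespace PGame

/-- recursion on the moves of a pre-game -/
@[elab_as_elim]
noncomputable def moveRecOn {C : PGame → Sort*} (x : PGame)
    (IH : ∀ y : PGame, (∀ i, C (y.moveLeft i)) → (∀ j, C (y.moveRight j)) → C y) : C x :=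
  PGame.rec (motive := C) (fun yl yr yL yR ihl ihr => IH (mk yl yr yL yR) ihl ihr) x

theorem leftMoves_neg (x : PGame) : (-x).LeftMoves = x.RightMoves := by cases x; rfl

theorem rightMoves_neg (x : PGame) : (-x).RightMoves = x.LeftMoves := by cases x; rfl

def toLeftMovesNeg {x : PGame} : x.RightMoves ≃ (-x).LeftMoves :=
  Equiv.cast (leftMoves_neg x).symm

def toRightMovesNeg {x : PGame} : x.LeftMoves ≃ (-x).RightMoves :=
  Equiv.cast (rightMoves_neg x).symm

theorem moveLeft_neg' {x : PGame} (i) :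
    (-x).moveLeft i = -x.moveRight (toLeftMovesNeg.symm i) := by cases x; rfl

theorem moveRight_neg' {x : PGame} (i) :
    (-x).moveRight i = -x.moveLeft (toRightMovesNeg.symm i) := by cases x; rfl

theorem neg_neg_aux (x : PGame) : -(-x) = x := by
  induction x with
  | mk l r L R ihL ihR =>
    show mk l r (fun i => -(-L i)) (fun j => -(-R j)) = mk l r L R
    simp only [ihL, ihR]

instance : InvolutiveNeg PGame := { (inferInstance : Neg PGame) with neg_neg := neg_neg_aux }

theorem leftMoves_add (x y : PGame) : (x + y).LeftMoves = (x.LeftMoves ⊕ y.LeftMoves) := by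
  cases x; cases y; rfl

theorem rightMoves_add (x y : PGame) : (x + y).RightMoves = (x.RightMoves ⊕ y.RightMoves) := by
  cases x; cases y; rfl

def toLeftMovesAdd {x y : PGame} : x.LeftMoves ⊕ y.LeftMoves ≃ (x + y).LeftMoves :=
  Equiv.cast (leftMoves_add x y).symm

def toRightMovesAdd {x y : PGame} : x.RightMoves ⊕ y.RightMoves ≃ (x + y).RightMoves :=
  Equiv.cast (rightMoves_add x y).symm

theorem add_moveLeft_inl {x : PGame} (y : PGame) (i) :
    (x + y).moveLeft (toLeftMovesAdd (Sum.inl i)) = x.moveLeft i + y := by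
  cases x; cases y; rfl

theorem add_moveRight_inl {x : PGame} (y : PGame) (i) :
    (x + y).moveRight (toRightMovesAdd (Sum.inl i)) = x.moveRight i + y := by
  cases x; cases y; rfl

theorem add_moveLeft_inr (x : PGame) {y : PGame} (i) :
    (x + y).moveLeft (toLeftMovesAdd (Sum.inr i)) = x + y.moveLeft i := by
  cases x; cases y; rfl

theorem add_moveRight_inr (x : PGame) {y : PGame} (i) :
    (x + y).moveRight (toRightMovesAdd (Sum.inr i)) = x + y.moveRight i := by
  cases x; cases y; rfl

instance : IsEmpty (LeftMoves 0) := inferInstanceAs (IsEmpty PEmpty)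

instance : IsEmpty (RightMoves 0) := inferInstanceAs (IsEmpty PEmpty)

instance : Finite (LeftMoves 0) := inferInstanceAs (Finite PEmpty)

instance : Finite (RightMoves 0) := inferInstanceAs (Finite PEmpty)

instance : Finite star.LeftMoves := inferInstanceAs (Finite PUnit)

instance : Finite star.RightMoves := inferInstanceAs (Finite PUnit)

/-- relabellings of pre-games -/
inductive Relabelling : PGame.{u} → PGame.{u} → Prop
  | mk : ∀ {x y : PGame} (L : x.LeftMoves ≃ y.LeftMoves) (R : x.RightMoves ≃ y.RightMoves),
      (∀ i, Relabelling (x.moveLeft i) (y.moveLeft (L i))) →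
      (∀ j, Relabelling (x.moveRight j) (y.moveRight (R j))) → Relabelling x y

infix:50 " ≡r " => SetTheory.PGame.Relabelling

theorem Relabelling.refl (x : PGame) : x ≡r x := by
  induction x with
  | mk l r L R ihL ihR => exact ⟨Equiv.refl _, Equiv.refl _, ihL, ihR⟩

theorem Relabelling.trans {x y z : PGame} (h1 : x ≡r y) (h2 : y ≡r z) : x ≡r z := by
  induction h1 generalizing z with
  | mk L R hL hR ihL ihR =>
    cases h2 with
    | mk L' R' hL' hR' =>
      exact ⟨L.trans L', R.trans R', fun i => ihL i (hL' (L i)), fun j => ihR j (hR' (R j))⟩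

theorem Relabelling.addCongr {w x y z : PGame} (h1 : w ≡r x) (h2 : y ≡r z) :
    w + y ≡r x + z := by
  induction h1 generalizing y z with
  | mk L₁ R₁ hL₁ hR₁ ih1L ih1R =>
    induction h2 with
    | mk L₂ R₂ hL₂ hR₂ ih2L ih2R =>
      refine ⟨toLeftMovesAdd.symm.trans ((Equiv.sumCongr L₁ L₂).trans toLeftMovesAdd),
        toRightMovesAdd.symm.trans ((Equiv.sumCongr R₁ R₂).trans toRightMovesAdd), ?_, ?_⟩
      · intro i
        rcases toLeftMovesAdd.surjective i with ⟨i | i, rfl⟩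
        · simp only [Equiv.trans_apply, Equiv.symm_apply_apply, Equiv.sumCongr_apply,
            Sum.map_inl, add_moveLeft_inl]
          exact ih1L i (Relabelling.mk L₂ R₂ hL₂ hR₂)
        · simp only [Equiv.trans_apply, Equiv.symm_apply_apply, Equiv.sumCongr_apply,
            Sum.map_inr, add_moveLeft_inr]
          exact ih2L i
      · intro i
        rcases toRightMovesAdd.surjective i with ⟨i | i, rfl⟩
        · simp only [Equiv.trans_apply, Equiv.symm_apply_apply, Equiv.sumCongr_apply,
            Sum.map_inl, add_moveRight_inl]
          exact ih1R i (Relabelling.mk L₂ R₂ hL₂ hR₂)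
        · simp only [Equiv.trans_apply, Equiv.symm_apply_apply, Equiv.sumCongr_apply,
            Sum.map_inr, add_moveRight_inr]
          exact ih2R i

theorem addCommRelabelling (x y : PGame) : x + y ≡r y + x := by
  induction x generalizing y with
  | mk xl xr xL xR ihxl ihxr =>
    induction y with
    | mk yl yr yL yR ihyl ihyr =>
      refine ⟨Equiv.sumComm _ _, Equiv.sumComm _ _, ?_, ?_⟩ <;> rintro (i | i)
      · exact ihxl i (mk yl yr yL yR)
      · exact ihyl i
      · exact ihxr i (mk yl yr yL yR)
      · exact ihyr i

theorem zeroAddRelabelling (x : PGame) : 0 + x ≡r x := by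
  induction x with
  | mk l r L R ihL ihR =>
    refine ⟨Equiv.emptySum PEmpty _, Equiv.emptySum PEmpty _, ?_, ?_⟩ <;> rintro (i | i)
    · exact i.elim
    · exact ihL i
    · exact i.elim
    · exact ihR i

theorem negAddRelabelling (x y : PGame) : -(x + y) ≡r -x + -y := by
  induction x generalizing y with
  | mk xl xr xL xR ihxl ihxr =>
    induction y with
    | mk yl yr yL yR ihyl ihyr =>
      refine ⟨Equiv.refl _, Equiv.refl _, ?_, ?_⟩ <;> rintro (i | i)
      · exact ihxr i (mk yl yr yL yR)
      · exact ihyr i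
      · exact ihxl i (mk yl yr yL yR)
      · exact ihyl i

end PGame

end SetTheory

namespace MisereDicot

/-! ### Basic unfolding lemmas -/

theorem lwf_iff (G : PGame) :
    LeftWinsFirst G ↔ IsEmpty G.LeftMoves ∨ ∃ i, ¬ RightWinsFirst (G.moveLeft i) := by
  rw [LeftWinsFirst]

theorem rwf_iff (G : PGame) :
    RightWinsFirst G ↔ IsEmpty G.RightMoves ∨ ∃ j, ¬ LeftWinsFirst (G.moveRight j) := by
  rw [RightWinsFirst]

theorem not_lwf_iff (G : PGame) :
    ¬ LeftWinsFirst G ↔ Nonempty G.LeftMoves ∧ ∀ i, RightWinsFirst (G.moveLeft i) := by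
  rw [lwf_iff]; push_neg
  exact Iff.rfl

theorem not_rwf_iff (G : PGame) :
    ¬ RightWinsFirst G ↔ Nonempty G.RightMoves ∧ ∀ j, LeftWinsFirst (G.moveRight j) := by
  rw [rwf_iff]; push_neg
  exact Iff.rfl

/-- conjugation swaps the players' winning predicates -/
theorem neg_wf (G : PGame) :
    (LeftWinsFirst (-G) ↔ RightWinsFirst G) ∧ (RightWinsFirst (-G) ↔ LeftWinsFirst G) := by
  induction G using PGame.moveRecOn with
  | _ G ihl ihr =>
    constructor
    · rw [lwf_iff, rwf_iff]
      constructor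
      · rintro (h | ⟨i, hi⟩)
        · exact Or.inl ((PGame.toLeftMovesNeg (x := G)).symm.isEmpty_congr.mp h)
        · refine Or.inr ⟨PGame.toLeftMovesNeg.symm i, fun hL => hi ?_⟩
          rw [PGame.moveLeft_neg'] at *
          exact ((ihr _).2).mpr hL
      · rintro (h | ⟨j, hj⟩)
        · exact Or.inl ((PGame.toLeftMovesNeg (x := G)).isEmpty_congr.mp h)
        · refine Or.inr ⟨PGame.toLeftMovesNeg j, fun hR => hj ?_⟩
          rw [PGame.moveLeft_neg'] at hR
          simp only [Equiv.symm_apply_apply] at hR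
          exact ((ihr _).2).mp hR
    · rw [rwf_iff, lwf_iff]
      constructor
      · rintro (h | ⟨i, hi⟩)
        · exact Or.inl ((PGame.toRightMovesNeg (x := G)).symm.isEmpty_congr.mp h)
        · refine Or.inr ⟨PGame.toRightMovesNeg.symm i, fun hL => hi ?_⟩
          rw [PGame.moveRight_neg'] at *
          exact ((ihl _).1).mpr hL
      · rintro (h | ⟨j, hj⟩)
        · exact Or.inl ((PGame.toRightMovesNeg (x := G)).isEmpty_congr.mp h)
        · refine Or.inr ⟨PGame.toRightMovesNeg j, fun hR => hj ?_⟩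
          rw [PGame.moveRight_neg'] at hR
          simp only [Equiv.symm_apply_apply] at hR
          exact ((ihl _).1).mp hR

theorem lwf_neg (G : PGame) : LeftWinsFirst (-G) ↔ RightWinsFirst G := (neg_wf G).1
theorem rwf_neg (G : PGame) : RightWinsFirst (-G) ↔ LeftWinsFirst G := (neg_wf G).2


/-- winning predicates only depend on the game up to relabelling -/
theorem rel_wf {x y : PGame} (r : x ≡r y) :
    (LeftWinsFirst x ↔ LeftWinsFirst y) ∧ (RightWinsFirst x ↔ RightWinsFirst y) := by
  induction r with
  | mk L R hL hR ihL ihR =>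
    constructor
    · rw [lwf_iff, lwf_iff]
      apply or_congr
      · exact L.isEmpty_congr
      · constructor
        · rintro ⟨i, hi⟩; exact ⟨L i, fun h => hi ((ihL i).2.mpr h)⟩
        · rintro ⟨i, hi⟩
          exact ⟨L.symm i, fun h => hi (by
            have := (ihL (L.symm i)).2.mp h
            simpa using this)⟩
    · rw [rwf_iff, rwf_iff]
      apply or_congr
      · exact R.isEmpty_congr
      · constructor
        · rintro ⟨j, hj⟩; exact ⟨R j, fun h => hj ((ihR j).1.mpr h)⟩
        · rintro ⟨j, hj⟩
          exact ⟨R.symm j, fun h => hj (by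
            have := (ihR (R.symm j)).1.mp h
            simpa using this)⟩

theorem rel_lwf {x y : PGame} (r : x ≡r y) : LeftWinsFirst x ↔ LeftWinsFirst y := (rel_wf r).1
theorem rel_rwf {x y : PGame} (r : x ≡r y) : RightWinsFirst x ↔ RightWinsFirst y := (rel_wf r).2

/-- adding a game with no moves does not change anything -/
theorem add_dead_wf (X : PGame) (hl : IsEmpty X.LeftMoves) (hr : IsEmpty X.RightMoves) :
    ∀ B : PGame, (LeftWinsFirst (B + X) ↔ LeftWinsFirst B) ∧
      (RightWinsFirst (B + X) ↔ RightWinsFirst B) := by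
  intro B
  induction B using PGame.moveRecOn with
  | _ B ihl ihr =>
    constructor
    · rw [lwf_iff, lwf_iff]
      apply or_congr
      · rw [(PGame.toLeftMovesAdd (x := B) (y := X)).symm.isEmpty_congr]
        simp [isEmpty_sum, hl]
      · constructor
        · rintro ⟨i, hi⟩
          rcases (PGame.toLeftMovesAdd (x := B) (y := X)).surjective i with ⟨i', rfl⟩
          rcases i' with i' | i'
          · refine ⟨i', fun h => hi ?_⟩
            rw [PGame.add_moveLeft_inl]
            exact ((ihl i').2).mpr h
          · exact (hl.false i').elim
        · rintro ⟨i, hi⟩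
          refine ⟨PGame.toLeftMovesAdd (Sum.inl i), fun h => hi ?_⟩
          rw [PGame.add_moveLeft_inl] at h
          exact ((ihl i).2).mp h
    · rw [rwf_iff, rwf_iff]
      apply or_congr
      · rw [(PGame.toRightMovesAdd (x := B) (y := X)).symm.isEmpty_congr]
        simp [isEmpty_sum, hr]
      · constructor
        · rintro ⟨j, hj⟩
          rcases (PGame.toRightMovesAdd (x := B) (y := X)).surjective j with ⟨j', rfl⟩
          rcases j' with j' | j'
          · refine ⟨j', fun h => hj ?_⟩
            rw [PGame.add_moveRight_inl]
            exact ((ihr j').1).mpr h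
          · exact (hr.false j').elim
        · rintro ⟨j, hj⟩
          refine ⟨PGame.toRightMovesAdd (Sum.inl j), fun h => hj ?_⟩
          rw [PGame.add_moveRight_inl] at h
          exact ((ihr j).1).mp h

/-! ### Followers, dicot and short closure -/

theorem follower_refl (G : PGame) : Follower G G := Relation.ReflTransGen.refl

theorem follower_of_isOption {G' G : PGame} (h : PGame.IsOption G' G) : Follower G' G :=
  Relation.ReflTransGen.single h

theorem follower_trans {A B C : PGame} (h1 : Follower A B) (h2 : Follower B C) : Follower A C :=
  Relation.ReflTransGen.trans h1 h2

theorem dicot_isOption {G G' : PGame} (h : Dicot G) (ho : PGame.IsOption G' G) : Dicot G' :=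
  fun K hf => h K (follower_trans hf (follower_of_isOption ho))

theorem dicot_moveLeft {G : PGame} (h : Dicot G) (i : G.LeftMoves) : Dicot (G.moveLeft i) :=
  dicot_isOption h (PGame.IsOption.moveLeft i)

theorem dicot_moveRight {G : PGame} (h : Dicot G) (j : G.RightMoves) : Dicot (G.moveRight j) :=
  dicot_isOption h (PGame.IsOption.moveRight j)

theorem dicot_empty_iff {G : PGame} (h : Dicot G) :
    IsEmpty G.LeftMoves ↔ IsEmpty G.RightMoves := h G (follower_refl G)

theorem short_isOption {G G' : PGame} (h : IsShort G) (ho : PGame.IsOption G' G) : IsShort G' :=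
  fun K hf => h K (follower_trans hf (follower_of_isOption ho))

theorem short_moveLeft {G : PGame} (h : IsShort G) (i : G.LeftMoves) : IsShort (G.moveLeft i) :=
  short_isOption h (PGame.IsOption.moveLeft i)

theorem short_moveRight {G : PGame} (h : IsShort G) (j : G.RightMoves) : IsShort (G.moveRight j) :=
  short_isOption h (PGame.IsOption.moveRight j)

/-- build a dicot from the top condition and options -/
theorem dicot_of {G : PGame} (h0 : IsEmpty G.LeftMoves ↔ IsEmpty G.RightMoves)
    (h : ∀ G', PGame.IsOption G' G → Dicot G') : Dicot G := by
  intro K hf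
  rcases Relation.ReflTransGen.cases_tail hf with rfl | ⟨c, hc, ho⟩
  · exact h0
  · exact h c ho K hc

theorem short_of {G : PGame} (h1 : Finite G.LeftMoves) (h2 : Finite G.RightMoves)
    (h : ∀ G', PGame.IsOption G' G → IsShort G') : IsShort G := by
  intro K hf
  rcases Relation.ReflTransGen.cases_tail hf with rfl | ⟨c, hc, ho⟩
  · exact ⟨h1, h2⟩
  · exact h c ho K hc

theorem isOption_add {K A B : PGame} (h : PGame.IsOption K (A + B)) :
    (∃ K', PGame.IsOption K' A ∧ K = K' + B) ∨ (∃ K', PGame.IsOption K' B ∧ K = A + K') := by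
  cases h with
  | moveLeft i =>
    rcases (PGame.toLeftMovesAdd (x := A) (y := B)).surjective i with ⟨i', rfl⟩
    rcases i' with i' | i'
    · exact Or.inl ⟨A.moveLeft i', PGame.IsOption.moveLeft i', PGame.add_moveLeft_inl B i'⟩
    · exact Or.inr ⟨B.moveLeft i', PGame.IsOption.moveLeft i', PGame.add_moveLeft_inr A i'⟩
  | moveRight j =>
    rcases (PGame.toRightMovesAdd (x := A) (y := B)).surjective j with ⟨j', rfl⟩
    rcases j' with j' | j'
    · exact Or.inl ⟨A.moveRight j', PGame.IsOption.moveRight j', PGame.add_moveRight_inl B j'⟩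
    · exact Or.inr ⟨B.moveRight j', PGame.IsOption.moveRight j', PGame.add_moveRight_inr A j'⟩

theorem follower_add {K A B : PGame} (h : Follower K (A + B)) :
    ∃ A' B', Follower A' A ∧ Follower B' B ∧ K = A' + B' := by
  induction h using Relation.ReflTransGen.head_induction_on with
  | refl => exact ⟨A, B, follower_refl A, follower_refl B, rfl⟩
  | head h' _ ih =>
    rcases ih with ⟨A', B', hA, hB, rfl⟩
    rcases isOption_add h' with ⟨K', ho, rfl⟩ | ⟨K', ho, rfl⟩
    · exact ⟨K', B', (hA.head ho), hB, rfl⟩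
    · exact ⟨A', K', hA, (hB.head ho), rfl⟩

theorem dicot_add {A B : PGame} (hA : Dicot A) (hB : Dicot B) : Dicot (A + B) := by
  intro K hf
  rcases follower_add hf with ⟨A', B', hfa, hfb, rfl⟩
  have ha := hA A' hfa
  have hb := hB B' hfb
  rw [(PGame.toLeftMovesAdd (x := A') (y := B')).symm.isEmpty_congr,
      (PGame.toRightMovesAdd (x := A') (y := B')).symm.isEmpty_congr]
  simp only [isEmpty_sum]
  exact and_congr ha hb

theorem short_add {A B : PGame} (hA : IsShort A) (hB : IsShort B) : IsShort (A + B) := by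
  intro K hf
  rcases follower_add hf with ⟨A', B', hfa, hfb, rfl⟩
  have ha := hA A' hfa
  have hb := hB B' hfb
  constructor
  · have : Finite (A'.LeftMoves ⊕ B'.LeftMoves) := by
      have := ha.1; have := hb.1; infer_instance
    exact Finite.of_equiv _ PGame.toLeftMovesAdd
  · have : Finite (A'.RightMoves ⊕ B'.RightMoves) := by
      have := ha.2; have := hb.2; infer_instance
    exact Finite.of_equiv _ PGame.toRightMovesAdd

theorem isOption_neg {K A : PGame} (h : PGame.IsOption K (-A)) :
    ∃ K', PGame.IsOption K' A ∧ K = -K' := by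
  cases h with
  | moveLeft i =>
    exact ⟨A.moveRight (PGame.toLeftMovesNeg.symm i), PGame.IsOption.moveRight _,
      PGame.moveLeft_neg' i⟩
  | moveRight j =>
    exact ⟨A.moveLeft (PGame.toRightMovesNeg.symm j), PGame.IsOption.moveLeft _,
      PGame.moveRight_neg' j⟩

theorem follower_neg {K A : PGame} (h : Follower K (-A)) :
    ∃ K', Follower K' A ∧ K = -K' := by
  induction h using Relation.ReflTransGen.head_induction_on with
  | refl => exact ⟨A, follower_refl A, rfl⟩
  | head h' _ ih =>
    rcases ih with ⟨A', hA, rfl⟩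
    rcases isOption_neg h' with ⟨K', ho, rfl⟩
    exact ⟨K', hA.head ho, rfl⟩

theorem dicot_neg {A : PGame} (hA : Dicot A) : Dicot (-A) := by
  intro K hf
  rcases follower_neg hf with ⟨A', hfa, rfl⟩
  have ha := hA A' hfa
  rw [(PGame.toLeftMovesNeg (x := A')).symm.isEmpty_congr,
      (PGame.toRightMovesNeg (x := A')).symm.isEmpty_congr]
  exact ha.symm

theorem short_neg {A : PGame} (hA : IsShort A) : IsShort (-A) := by
  intro K hf
  rcases follower_neg hf with ⟨A', hfa, rfl⟩
  have ha := hA A' hfa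
  constructor
  · have := ha.2; exact Finite.of_equiv _ PGame.toLeftMovesNeg
  · have := ha.1; exact Finite.of_equiv _ PGame.toRightMovesNeg

theorem dicot_zero : Dicot 0 := by
  refine dicot_of ?_ ?_
  · constructor <;> intro _ <;> infer_instance
  · intro G' h
    cases h with
    | moveLeft i => exact i.elim
    | moveRight j => exact j.elim

theorem short_zero : IsShort 0 := by
  refine short_of ?_ ?_ ?_
  · infer_instance
  · infer_instance
  · intro G' h
    cases h with
    | moveLeft i => exact i.elim
    | moveRight j => exact j.elim

theorem dicot_star : Dicot star := by
  refine dicot_of ?_ ?_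
  · exact Iff.rfl
  · intro G' h
    cases h with
    | moveLeft i => exact dicot_zero
    | moveRight j => exact dicot_zero

theorem short_star : IsShort star := by
  refine short_of ?_ ?_ ?_
  · infer_instance
  · infer_instance
  · intro G' h
    cases h with
    | moveLeft i => exact short_zero
    | moveRight j => exact short_zero

/-! ### Adjoint lemmas -/

theorem adjoint_dead {l r : Type u} {L : l → PGame} {R : r → PGame}
    (hl : IsEmpty l) (hr : IsEmpty r) : adjoint (PGame.mk l r L R) = star := by
  rw [adjoint, if_pos ⟨hl, hr⟩]

theorem adjoint_alive {l r : Type u} {L : l → PGame} {R : r → PGame}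
    (hl : ¬ IsEmpty l) (hr : ¬ IsEmpty r) :
    adjoint (PGame.mk l r L R) =
      PGame.mk r l (fun j => adjoint (R j)) (fun i => adjoint (L i)) := by
  rw [adjoint, if_neg (by tauto), if_neg hl, if_neg hr]

theorem dicot_adjoint : ∀ (G : PGame), Dicot G → Dicot (adjoint G) := by
  intro G
  induction G using PGame.moveRecOn with
  | _ G ihl ihr =>
    cases G with | mk l r L R =>
    intro hd
    by_cases hl : IsEmpty l
    · have hr : IsEmpty r := (dicot_empty_iff hd).mp hl
      rw [adjoint_dead hl hr]
      exact dicot_star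
    · have hr : ¬ IsEmpty r := fun h => hl ((dicot_empty_iff hd).mpr h)
      rw [adjoint_alive hl hr]
      refine dicot_of (iff_of_false hr hl) ?_
      intro G' h
      cases h with
      | moveLeft j => exact ihr j (dicot_moveRight hd j)
      | moveRight i => exact ihl i (dicot_moveLeft hd i)

theorem short_adjoint : ∀ (G : PGame), IsShort G → IsShort (adjoint G) := by
  intro G
  induction G using PGame.moveRecOn with
  | _ G ihl ihr =>
    cases G with | mk l r L R =>
    intro hs
    have htop := hs _ (follower_refl _)
    by_cases hl : IsEmpty l
    · by_cases hr : IsEmpty r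
      · rw [adjoint_dead hl hr]; exact short_star
      · rw [adjoint, if_neg (by tauto), if_pos hl]
        refine short_of htop.2 (inferInstanceAs (Finite PUnit.{u_1+1})) ?_
        intro G' h
        cases h with
        | moveLeft j => exact ihr j (short_moveRight hs j)
        | moveRight i => exact short_zero
    · by_cases hr : IsEmpty r
      · rw [adjoint, if_neg (by tauto), if_neg hl, if_pos hr]
        refine short_of (inferInstanceAs (Finite PUnit.{u_1+1})) htop.1 ?_
        intro G' h
        cases h with
        | moveLeft j => exact short_zero
        | moveRight i => exact ihl i (short_moveLeft hs i)
      · rw [adjoint_alive hl hr]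
        refine short_of htop.2 htop.1 ?_
        intro G' h
        cases h with
        | moveLeft j => exact ihr j (short_moveRight hs j)
        | moveRight i => exact ihl i (short_moveLeft hs i)

/-- the adjoint theorem: `Y + Y°` is a previous-player win -/
theorem adjoint_P : ∀ (Y : PGame), Dicot Y →
    ¬ LeftWinsFirst (Y + adjoint Y) ∧ ¬ RightWinsFirst (Y + adjoint Y) := by
  intro Y
  induction Y using PGame.moveRecOn with
  | _ Y ihl ihr =>
    cases Y with | mk l r L R =>
    intro hd
    set Ygame := PGame.mk l r L R with hY
    by_cases hl : IsEmpty l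
    · have hr : IsEmpty r := (dicot_empty_iff hd).mp hl
      rw [adjoint_dead hl hr]
      constructor
      · rw [not_lwf_iff]
        constructor
        · exact ⟨PGame.toLeftMovesAdd (Sum.inr PUnit.unit)⟩
        · intro i
          rcases (PGame.toLeftMovesAdd).surjective i with ⟨i', rfl⟩
          rcases i' with i' | i'
          · exact (hl.false i').elim
          · rw [PGame.add_moveLeft_inr]
            rw [rwf_iff]
            left
            rw [(PGame.toRightMovesAdd).symm.isEmpty_congr]
            simp only [isEmpty_sum]
            exact ⟨hr, inferInstanceAs (IsEmpty PEmpty)⟩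
      · rw [not_rwf_iff]
        constructor
        · exact ⟨PGame.toRightMovesAdd (Sum.inr PUnit.unit)⟩
        · intro j
          rcases (PGame.toRightMovesAdd).surjective j with ⟨j', rfl⟩
          rcases j' with j' | j'
          · exact (hr.false j').elim
          · rw [PGame.add_moveRight_inr]
            rw [lwf_iff]
            left
            rw [(PGame.toLeftMovesAdd).symm.isEmpty_congr]
            simp only [isEmpty_sum]
            exact ⟨hl, inferInstanceAs (IsEmpty PEmpty)⟩
    · have hr : ¬ IsEmpty r := fun h => hl ((dicot_empty_iff hd).mpr h)
      rw [adjoint_alive hl hr]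
      set A := PGame.mk r l (fun j => adjoint (R j)) (fun i => adjoint (L i)) with hA
      constructor
      · rw [not_lwf_iff]
        constructor
        · rcases not_isEmpty_iff.mp hl with ⟨i⟩
          exact ⟨PGame.toLeftMovesAdd (Sum.inl i)⟩
        · intro i
          rcases (PGame.toLeftMovesAdd).surjective i with ⟨i', rfl⟩
          rcases i' with i' | j'
          · rw [PGame.add_moveLeft_inl]
            rw [rwf_iff]
            refine Or.inr ⟨PGame.toRightMovesAdd (Sum.inr i'), ?_⟩
            erw [PGame.add_moveRight_inr]
            exact (ihl i' (dicot_moveLeft hd i')).1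
          · rw [PGame.add_moveLeft_inr]
            rw [rwf_iff]
            refine Or.inr ⟨PGame.toRightMovesAdd (Sum.inl j'), ?_⟩
            erw [PGame.add_moveRight_inl]
            exact (ihr j' (dicot_moveRight hd j')).1
      · rw [not_rwf_iff]
        constructor
        · rcases not_isEmpty_iff.mp hr with ⟨j⟩
          exact ⟨PGame.toRightMovesAdd (Sum.inl j)⟩
        · intro j
          rcases (PGame.toRightMovesAdd).surjective j with ⟨j', rfl⟩
          rcases j' with j' | i'
          · rw [PGame.add_moveRight_inl]
            rw [lwf_iff]
            refine Or.inr ⟨PGame.toLeftMovesAdd (Sum.inr j'), ?_⟩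
            erw [PGame.add_moveLeft_inr]
            exact (ihr j' (dicot_moveRight hd j')).2
          · rw [PGame.add_moveRight_inr]
            rw [lwf_iff]
            refine Or.inr ⟨PGame.toLeftMovesAdd (Sum.inl i'), ?_⟩
            erw [PGame.add_moveLeft_inl]
            exact (ihl i' (dicot_moveLeft hd i')).2

/-! ### The certificate for `≼ 0` and the hard direction -/

/-- Certificate that `W ≼ 0` modulo dicots: Right wins moving first, and every
Left option reverses out through a certified Right response. -/
def CL (W : PGame) : Prop :=
  RightWinsFirst W ∧
    ∀ i : W.LeftMoves, ∃ j : (W.moveLeft i).RightMoves, CL ((W.moveLeft i).moveRight j)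
termination_by W.birthday
decreasing_by exact lt_trans (PGame.birthday_moveRight_lt j) (PGame.birthday_moveLeft_lt i)

theorem cl_iff (W : PGame) : CL W ↔ RightWinsFirst W ∧
    ∀ i : W.LeftMoves, ∃ j : (W.moveLeft i).RightMoves, CL ((W.moveLeft i).moveRight j) := by
  rw [CL]

theorem cl_of_dead {W : PGame} (hl : IsEmpty W.LeftMoves) (hr : IsEmpty W.RightMoves) : CL W := by
  rw [cl_iff]
  exact ⟨(rwf_iff W).mpr (Or.inl hr), fun i => (hl.false i).elim⟩

/-- `W ≼ 0` semantically (in the misère dicot universe). -/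
def SemLe (W : PGame) : Prop :=
  ∀ X : PGame, IsShort X → Dicot X →
    (LeftWinsFirst (W + X) → LeftWinsFirst X) ∧
    (¬ RightWinsFirst (W + X) → ¬ RightWinsFirst X)

theorem not_lwf_star : ¬ LeftWinsFirst star := by
  rw [not_lwf_iff]
  refine ⟨⟨PUnit.unit⟩, fun u => ?_⟩
  rw [rwf_iff]
  exact Or.inl (inferInstanceAs (IsEmpty PEmpty))

theorem semLe_CL (W : PGame) (hs : IsShort W) (hd : Dicot W) (h : SemLe W) : CL W := by
  rw [cl_iff]
  constructor
  · -- Right wins `W` moving first, from the test `X = 0`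
    have h0 := (h 0 short_zero dicot_zero).2
    have hRW0 : RightWinsFirst (W + 0) := by
      by_contra hno
      exact (h0 hno) ((rwf_iff 0).mpr (Or.inl (inferInstanceAs (IsEmpty PEmpty))))
    exact ((add_dead_wf 0 (inferInstanceAs (IsEmpty PEmpty)) (inferInstanceAs (IsEmpty PEmpty)) W).2).mp hRW0
  · intro i
    by_contra hnone
    push_neg at hnone
    by_cases hAl : IsEmpty (W.moveLeft i).LeftMoves
    · -- the Left option is dead: the test `star` contradicts `SemLe W`
      have hAr : IsEmpty (W.moveLeft i).RightMoves :=
        (dicot_empty_iff (dicot_moveLeft hd i)).mp hAl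
      have hL : LeftWinsFirst (W + star) := by
        rw [lwf_iff]
        refine Or.inr ⟨PGame.toLeftMovesAdd (Sum.inl i), ?_⟩
        rw [PGame.add_moveLeft_inl, not_rwf_iff]
        refine ⟨⟨PGame.toRightMovesAdd (Sum.inr PUnit.unit)⟩, fun j => ?_⟩
        rcases (PGame.toRightMovesAdd).surjective j with ⟨j', rfl⟩
        rcases j' with j' | j'
        · exact (hAr.false j').elim
        · rw [PGame.add_moveRight_inr, lwf_iff]
          left
          rw [(PGame.toLeftMovesAdd).symm.isEmpty_congr]
          simp only [isEmpty_sum]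
          exact ⟨hAl, inferInstanceAs (IsEmpty PEmpty)⟩
      exact not_lwf_star ((h star short_star dicot_star).1 hL)
    · -- the Left option is alive
      have hAr : ¬ IsEmpty (W.moveLeft i).RightMoves :=
        fun hh => hAl ((dicot_empty_iff (dicot_moveLeft hd i)).mpr hh)
      set A := W.moveLeft i with hAdef
      -- each right response of `A` is alive and fails `SemLe`; extract chambers
      have hcham : ∀ j : A.RightMoves, ∃ C : PGame, IsShort C ∧ Dicot C ∧
          RightWinsFirst C ∧ ¬ RightWinsFirst (A.moveRight j + C) := by
        intro j
        set V := A.moveRight j with hVdef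
        have hVs : IsShort V := short_moveRight (short_moveLeft hs i) j
        have hVd : Dicot V := dicot_moveRight (dicot_moveLeft hd i) j
        have hVnot : ¬ SemLe V := fun hsem => hnone j (semLe_CL V hVs hVd hsem)
        have hValive : ¬ IsEmpty V.LeftMoves := by
          intro hdead
          exact hnone j (cl_of_dead hdead ((dicot_empty_iff hVd).mp hdead))
        have hVraive : ¬ IsEmpty V.RightMoves :=
          fun hh => hValive ((dicot_empty_iff hVd).mpr hh)
        rw [SemLe] at hVnot
        push_neg at hVnot
        obtain ⟨X, hXs, hXd, hbad⟩ := hVnot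
        by_cases himp : LeftWinsFirst (V + X) → LeftWinsFirst X
        case pos =>
          obtain ⟨h1, h2⟩ := hbad himp
          exact ⟨X, hXs, hXd, h2, h1⟩
        case neg =>
          rw [Classical.not_imp] at himp
          obtain ⟨hLVX, hnLX⟩ := himp
          refine ⟨PGame.mk V.RightMoves PUnit (fun k => adjoint (V.moveRight k)) (fun _ => X),
            ?_, ?_, ?_, ?_⟩
          · refine short_of ((hVs _ (follower_refl _)).2) (inferInstanceAs (Finite PUnit.{u_1+1})) ?_
            intro G' hG'
            cases hG' with
            | moveLeft k => exact short_adjoint _ (short_moveRight hVs k)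
            | moveRight u => exact hXs
          · refine dicot_of (iff_of_false hVraive (fun hh => hh.false PUnit.unit)) ?_
            intro G' hG'
            cases hG' with
            | moveLeft k => exact dicot_adjoint _ (dicot_moveRight hVd k)
            | moveRight u => exact hXd
          · rw [rwf_iff]
            exact Or.inr ⟨PUnit.unit, hnLX⟩
          · rw [not_rwf_iff]
            constructor
            · rcases not_isEmpty_iff.mp hVraive with ⟨k⟩
              exact ⟨PGame.toRightMovesAdd (Sum.inl k)⟩
            · intro jj
              rcases (PGame.toRightMovesAdd).surjective jj with ⟨jj', rfl⟩
              rcases jj' with k | u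
              · rw [PGame.add_moveRight_inl, lwf_iff]
                refine Or.inr ⟨PGame.toLeftMovesAdd (Sum.inr k), ?_⟩
                erw [PGame.add_moveLeft_inr]
                exact (adjoint_P (V.moveRight k) (dicot_moveRight hVd k)).2
              · rw [PGame.add_moveRight_inr]
                exact hLVX
      choose C hCs hCd hCr hCg using hcham
      -- the global gadget
      set E := PGame.mk PUnit.{u_1+1} PUnit.{u_1+1} (fun _ => adjoint A) (fun _ => adjoint A)
        with hEdef
      have hAs : IsShort A := short_moveLeft hs i
      have hAd : Dicot A := dicot_moveLeft hd i
      have hEs : IsShort E := by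
        refine short_of (inferInstanceAs (Finite PUnit.{u_1+1}))
          (inferInstanceAs (Finite PUnit.{u_1+1})) ?_
        intro G' hG'
        cases hG' with
        | moveLeft u => exact short_adjoint _ hAs
        | moveRight u => exact short_adjoint _ hAs
      have hEd : Dicot E := by
        refine dicot_of Iff.rfl ?_
        intro G' hG'
        cases hG' with
        | moveLeft u => exact dicot_adjoint _ hAd
        | moveRight u => exact dicot_adjoint _ hAd
      set XG := PGame.mk A.RightMoves PUnit.{u_1+1} (fun j => C j) (fun _ => E) with hXGdef
      have hXGs : IsShort XG := by
        refine short_of ((hAs _ (follower_refl _)).2) (inferInstanceAs (Finite PUnit.{u_1+1})) ?_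
        intro G' hG'
        cases hG' with
        | moveLeft k => exact hCs k
        | moveRight u => exact hEs
      have hXGd : Dicot XG := by
        refine dicot_of (iff_of_false hAr (fun hh => hh.false PUnit.unit)) ?_
        intro G' hG'
        cases hG' with
        | moveLeft k => exact hCd k
        | moveRight u => exact hEd
      -- Left wins `W + XG` moving first
      have hLWX : LeftWinsFirst (W + XG) := by
        rw [lwf_iff]
        refine Or.inr ⟨PGame.toLeftMovesAdd (Sum.inl i), ?_⟩
        rw [PGame.add_moveLeft_inl, not_rwf_iff]
        constructor
        · rcases not_isEmpty_iff.mp hAr with ⟨k⟩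
          exact ⟨PGame.toRightMovesAdd (Sum.inl k)⟩
        · intro j
          rcases (PGame.toRightMovesAdd).surjective j with ⟨j', rfl⟩
          rcases j' with k | u
          · rw [PGame.add_moveRight_inl, lwf_iff]
            refine Or.inr ⟨PGame.toLeftMovesAdd (Sum.inr k), ?_⟩
            erw [PGame.add_moveLeft_inr]
            exact hCg k
          · rw [PGame.add_moveRight_inr, lwf_iff]
            refine Or.inr ⟨PGame.toLeftMovesAdd (Sum.inr PUnit.unit), ?_⟩
            erw [PGame.add_moveLeft_inr]
            exact (adjoint_P A hAd).2
      -- but Left does not win `XG` alone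
      have hnXG : ¬ LeftWinsFirst XG := by
        rw [not_lwf_iff]
        constructor
        · rcases not_isEmpty_iff.mp hAr with ⟨k⟩
          exact ⟨k⟩
        · intro k
          exact hCr k
      exact hnXG ((h XG hXGs hXGd).1 hLWX)
termination_by W.birthday
decreasing_by exact lt_trans (PGame.birthday_moveRight_lt j) (PGame.birthday_moveLeft_lt i)

/-! ### The main transfer induction -/

/-- Main induction: a certificate `A + B ≼ 0` transfers Left's prospects
from `B + X` to `-A + X`. -/
theorem TL (A B X : PGame) (hA : Dicot A) (hB : Dicot B) (hX : Dicot X)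
    (hCL : CL (A + B)) :
    (LeftWinsFirst (B + X) → LeftWinsFirst (-A + X)) ∧
    (¬ RightWinsFirst (B + X) → ¬ RightWinsFirst (-A + X)) := by
  rw [cl_iff] at hCL
  obtain ⟨hP, hRev⟩ := hCL
  have hCL' : CL (A + B) := by rw [cl_iff]; exact ⟨hP, hRev⟩
  constructor
  · -- Left moving first
    intro hBX
    rw [lwf_iff] at hBX
    rcases hBX with hdead | ⟨ib, hib⟩
    · -- `B + X` has no Left moves at all
      rw [(PGame.toLeftMovesAdd).symm.isEmpty_congr, isEmpty_sum] at hdead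
      obtain ⟨hBl, hXl⟩ := hdead
      have hBr : IsEmpty B.RightMoves := (dicot_empty_iff hB).mp hBl
      have hXr : IsEmpty X.RightMoves := (dicot_empty_iff hX).mp hXl
      by_cases hAl : IsEmpty A.LeftMoves
      · have hAr : IsEmpty A.RightMoves := (dicot_empty_iff hA).mp hAl
        rw [lwf_iff]
        left
        rw [(PGame.toLeftMovesAdd).symm.isEmpty_congr, isEmpty_sum]
        exact ⟨(PGame.toLeftMovesNeg).symm.isEmpty_congr.mpr hAr, hXl⟩
      · have hRA : RightWinsFirst A := ((add_dead_wf B hBl hBr A).2).mp hP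
        rw [rwf_iff] at hRA
        rcases hRA with hAr | ⟨k, hk⟩
        · exact absurd ((dicot_empty_iff hA).mpr hAr) hAl
        · rw [lwf_iff]
          refine Or.inr ⟨PGame.toLeftMovesAdd (Sum.inl (PGame.toLeftMovesNeg k)), ?_⟩
          rw [PGame.add_moveLeft_inl, PGame.moveLeft_neg']
          simp only [Equiv.symm_apply_apply]
          intro hcon
          have hdd := ((add_dead_wf X hXl hXr (-(A.moveRight k))).2).mp hcon
          exact hk ((rwf_neg (A.moveRight k)).mp hdd)
    · rcases (PGame.toLeftMovesAdd).surjective ib with ⟨ib', rfl⟩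
      rcases ib' with ib' | ix
      · -- Left's winning move is in `B`
        rw [PGame.add_moveLeft_inl] at hib
        have hrev := hRev (PGame.toLeftMovesAdd (Sum.inr ib'))
        rw [PGame.add_moveLeft_inr] at hrev
        obtain ⟨jr, hjr⟩ := hrev
        rcases (PGame.toRightMovesAdd).surjective jr with ⟨jr', rfl⟩
        rcases jr' with k | m
        · rw [PGame.add_moveRight_inl] at hjr
          have := (TL (A.moveRight k) (B.moveLeft ib') X (dicot_moveRight hA k)
            (dicot_moveLeft hB ib') hX hjr).2 hib
          rw [lwf_iff]
          refine Or.inr ⟨PGame.toLeftMovesAdd (Sum.inl (PGame.toLeftMovesNeg k)), ?_⟩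
          rw [PGame.add_moveLeft_inl, PGame.moveLeft_neg']
          simpa using this
        · rw [PGame.add_moveRight_inr] at hjr
          rw [not_rwf_iff] at hib
          have hLm := hib.2 (PGame.toRightMovesAdd (Sum.inl m))
          rw [PGame.add_moveRight_inl] at hLm
          exact (TL A ((B.moveLeft ib').moveRight m) X hA
            (dicot_moveRight (dicot_moveLeft hB ib') m) hX hjr).1 hLm
      · -- Left's winning move is in `X`
        rw [PGame.add_moveLeft_inr] at hib
        have := (TL A B (X.moveLeft ix) hA hB (dicot_moveLeft hX ix) hCL').2 hib
        rw [lwf_iff]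
        refine Or.inr ⟨PGame.toLeftMovesAdd (Sum.inr ix), ?_⟩
        rw [PGame.add_moveLeft_inr]
        exact this
  · -- Left moving second
    intro hBX
    have hBXcopy := hBX
    rw [not_rwf_iff] at hBX
    obtain ⟨hne, hall⟩ := hBX
    have h1 : ∀ k : B.RightMoves, LeftWinsFirst (B.moveRight k + X) := by
      intro k
      have := hall (PGame.toRightMovesAdd (Sum.inl k))
      rwa [PGame.add_moveRight_inl] at this
    have h2 : ∀ jx : X.RightMoves, LeftWinsFirst (B + X.moveRight jx) := by
      intro jx
      have := hall (PGame.toRightMovesAdd (Sum.inr jx))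
      rwa [PGame.add_moveRight_inr] at this
    rw [not_rwf_iff]
    constructor
    · -- `-A + X` has a Right move
      by_cases hAL : IsEmpty A.LeftMoves
      · have hAR : IsEmpty A.RightMoves := (dicot_empty_iff hA).mp hAL
        by_cases hXr : IsEmpty X.RightMoves
        · exfalso
          have hXl : IsEmpty X.LeftMoves := (dicot_empty_iff hX).mpr hXr
          have hRB : RightWinsFirst B := by
            have hc := (rel_rwf (PGame.addCommRelabelling A B)).mp hP
            exact ((add_dead_wf A hAL hAR B).2).mp hc
          exact hBXcopy (((add_dead_wf X hXl hXr B).2).mpr hRB)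
        · rcases not_isEmpty_iff.mp hXr with ⟨jx⟩
          exact ⟨PGame.toRightMovesAdd (Sum.inr jx)⟩
      · rcases not_isEmpty_iff.mp hAL with ⟨ia⟩
        exact ⟨PGame.toRightMovesAdd (Sum.inl (PGame.toRightMovesNeg ia))⟩
    · intro j
      rcases (PGame.toRightMovesAdd).surjective j with ⟨j', rfl⟩
      rcases j' with ja | jx
      · -- Right moves in `-A`
        rw [PGame.add_moveRight_inl, PGame.moveRight_neg']
        set ia := (PGame.toRightMovesNeg).symm ja with hia
        have hrev := hRev (PGame.toLeftMovesAdd (Sum.inl ia))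
        rw [PGame.add_moveLeft_inl] at hrev
        obtain ⟨jr, hjr⟩ := hrev
        rcases (PGame.toRightMovesAdd).surjective jr with ⟨jr', rfl⟩
        rcases jr' with k | k
        · rw [PGame.add_moveRight_inl] at hjr
          have := (TL ((A.moveLeft ia).moveRight k) B X
            (dicot_moveRight (dicot_moveLeft hA ia) k) hB hX hjr).2 hBXcopy
          rw [lwf_iff]
          refine Or.inr ⟨PGame.toLeftMovesAdd (Sum.inl (PGame.toLeftMovesNeg k)), ?_⟩
          rw [PGame.add_moveLeft_inl, PGame.moveLeft_neg']
          simpa using this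
        · rw [PGame.add_moveRight_inr] at hjr
          exact (TL (A.moveLeft ia) (B.moveRight k) X (dicot_moveLeft hA ia)
            (dicot_moveRight hB k) hX hjr).1 (h1 k)
      · -- Right moves in `X`
        rw [PGame.add_moveRight_inr]
        exact (TL A B (X.moveRight jx) hA hB (dicot_moveRight hX jx) hCL').1 (h2 jx)
termination_by (A.birthday, B.birthday, X.birthday)
decreasing_by
  all_goals
    first
    | exact Prod.Lex.left _ _ (PGame.birthday_moveRight_lt _)
    | exact Prod.Lex.left _ _ (lt_trans (PGame.birthday_moveRight_lt _) (PGame.birthday_moveLeft_lt _))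
    | exact Prod.Lex.left _ _ (PGame.birthday_moveLeft_lt _)
    | exact Prod.Lex.right _ (Prod.Lex.left _ _
        (lt_trans (PGame.birthday_moveRight_lt _) (PGame.birthday_moveLeft_lt _)))
    | exact Prod.Lex.right _ (Prod.Lex.right _ (PGame.birthday_moveLeft_lt _))
    | exact Prod.Lex.right _ (Prod.Lex.right _ (PGame.birthday_moveRight_lt _))

/-! ### Outcome bookkeeping -/

theorem outcome_lwf_rwf {Y Z : PGame} (h : outcome Y = outcome Z) :
    (LeftWinsFirst Y ↔ LeftWinsFirst Z) ∧ (RightWinsFirst Y ↔ RightWinsFirst Z) := by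
  classical
  by_cases h1 : LeftWinsFirst Y <;> by_cases h2 : RightWinsFirst Y <;>
    by_cases h3 : LeftWinsFirst Z <;> by_cases h4 : RightWinsFirst Z <;>
      simp only [outcome, h1, h2, h3, h4, if_true, if_false] at h <;>
        simp_all

theorem outcome_congr {Y Z : PGame} (h1 : LeftWinsFirst Y ↔ LeftWinsFirst Z)
    (h2 : RightWinsFirst Y ↔ RightWinsFirst Z) : outcome Y = outcome Z := by
  classical
  simp only [outcome]
  exact if_congr h1 (if_congr h2 rfl rfl) (if_congr h2 rfl rfl)


/-- Conjugate property: for short dicots, if `G + H = 0` (mod `D⁻`)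
then `H = −G` (mod `D⁻`). -/
theorem stmt13 (G H : PGame) (hGs : IsShort G) (hGd : Dicot G)
    (hHs : IsShort H) (hHd : Dicot H) (h : Deq (G + H) 0) : Deq H (-G) := by
  have hsem : ∀ X : PGame, IsShort X → Dicot X →
      (LeftWinsFirst ((G + H) + X) ↔ LeftWinsFirst X) ∧
      (RightWinsFirst ((G + H) + X) ↔ RightWinsFirst X) := by
    intro X hXs hXd
    have h0 := outcome_lwf_rwf (h X hXs hXd)
    have hz := rel_wf (PGame.zeroAddRelabelling X)
    exact ⟨h0.1.trans hz.1, h0.2.trans hz.2⟩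
  have hGHs : IsShort (G + H) := short_add hGs hHs
  have hGHd : Dicot (G + H) := dicot_add hGd hHd
  have hCL1 : CL (G + H) := by
    apply semLe_CL _ hGHs hGHd
    intro X hXs hXd
    have hx := hsem X hXs hXd
    exact ⟨hx.1.mp, fun hn hr => hn (hx.2.mpr hr)⟩
  have hCL2 : CL (-H + -G) := by
    apply semLe_CL _ (short_add (short_neg hHs) (short_neg hGs))
      (dicot_add (dicot_neg hHd) (dicot_neg hGd))
    intro X hXs hXd
    have hx := hsem (-X) (short_neg hXs) (dicot_neg hXd)
    -- relabelling `-((H+G) + -X) ≡r (-H + -G) + X`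
    have r0 : -((H + G) + -X) ≡r (-(H + G)) + (-(-X)) := PGame.negAddRelabelling (H + G) (-X)
    rw [neg_neg] at r0
    have r1 : -((H + G) + -X) ≡r (-H + -G) + X :=
      r0.trans (PGame.Relabelling.addCongr (PGame.negAddRelabelling H G) (PGame.Relabelling.refl X))
    have rc : (H + G) + -X ≡r (G + H) + -X :=
      PGame.Relabelling.addCongr (PGame.addCommRelabelling H G) (PGame.Relabelling.refl (-X))
    have hLiff : LeftWinsFirst ((-H + -G) + X) ↔ LeftWinsFirst X := by
      rw [← rel_lwf r1, lwf_neg, rel_rwf rc, hx.2, rwf_neg]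
    have hRiff : RightWinsFirst ((-H + -G) + X) ↔ RightWinsFirst X := by
      rw [← rel_rwf r1, rwf_neg, rel_lwf rc, hx.1, lwf_neg]
    exact ⟨hLiff.mp, fun hn hr => hn (hRiff.mpr hr)⟩
  intro X hXs hXd
  have t1 := TL G H X hGd hHd hXd hCL1
  have t2 := TL (-H) (-G) X (dicot_neg hHd) (dicot_neg hGd) hXd hCL2
  rw [neg_neg] at t2
  refine outcome_congr ⟨t1.1, t2.1⟩ ⟨?_, ?_⟩
  · intro hr
    by_contra hn
    exact (t2.2 hn) hr
  · intro hr
    by_contra hn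
    exact (t1.2 hn) hr

end MisereDicot
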